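/- arXiv:2106.03340 — 4 statements merged into one kernel-verified Lean document; each statement's English description precedes it below -/
import Mathlib

section
/- Suppose k : 𝒵 × 𝒵 → ℝ is bounded and measurable and φ(X) is integrable. Then E[φ(X) k(Z,Z') φ(X')] = ∫_𝒵 ∫_𝒵 m(z) k(z,z') m(z') dP_Z(z) dP_Z(z'), i.e. the double expectation over an independent copy factorizes through the conditional mean function m. -/
open MeasureTheory

lemma aux_pullout
    {Ω 𝒵 : Type*} [MeasurableSpace Ω] [MeasurableSpace 𝒵]
    (P : Measure Ω) [IsProbabilityMeasure P]
    (Z : Ω → 𝒵) (hZ : Measurable Z)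
    (f : Ω → ℝ) (hf : Integrable f P)
    (m : 𝒵 → ℝ)
    (hcond : (fun ω => m (Z ω)) =ᵐ[P]
      P[f | MeasurableSpace.comap Z inferInstance])
    (g : 𝒵 → ℝ) (hg : Measurable g) (c : ℝ) (hgc : ∀ z, |g z| ≤ c) :
    ∫ ω, g (Z ω) * f ω ∂P = ∫ ω, g (Z ω) * m (Z ω) ∂P := by
  have hm_le : MeasurableSpace.comap Z inferInstance ≤ (inferInstance : MeasurableSpace Ω) :=
    hZ.comap_le
  have hgm : StronglyMeasurable[MeasurableSpace.comap Z inferInstance] (fun ω => g (Z ω)) :=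
    (hg.comp (Measurable.of_comap_le le_rfl)).stronglyMeasurable
  have h1 : P[(fun ω => g (Z ω) * f ω) | MeasurableSpace.comap Z inferInstance]
      =ᵐ[P] fun ω => g (Z ω) * (P[f | MeasurableSpace.comap Z inferInstance]) ω := by
    exact condExp_stronglyMeasurable_mul_of_bound hm_le hgm hf c
      (Filter.Eventually.of_forall fun ω => hgc (Z ω))
  calc ∫ ω, g (Z ω) * f ω ∂P
      = ∫ ω, (P[(fun ω => g (Z ω) * f ω) | MeasurableSpace.comap Z inferInstance]) ω ∂P :=
        (integral_condExp hm_le).symm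
    _ = ∫ ω, g (Z ω) * (P[f | MeasurableSpace.comap Z inferInstance]) ω ∂P :=
        integral_congr_ae h1
    _ = ∫ ω, g (Z ω) * m (Z ω) ∂P := by
        refine integral_congr_ae ?_
        filter_upwards [hcond] with ω hω
        rw [hω]

/-- For a bounded measurable kernel `k` and integrable `φ(X)`,
the double expectation over an independent copy factorizes through the
conditional mean function `m`, where `m ∘ Z` is a version of `E[φ(X) | σ(Z)]`:
`E[φ(X) k(Z,Z') φ(X')] = ∫∫ m(z) k(z,z') m(z') dP_Z(z) dP_Z(z')`. -/
theorem statement_1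
    {Ω 𝒳 𝒵 : Type*} [MeasurableSpace Ω] [MeasurableSpace 𝒳] [MeasurableSpace 𝒵]
    (P : Measure Ω) [IsProbabilityMeasure P]
    (X : Ω → 𝒳) (Z : Ω → 𝒵) (hX : Measurable X) (hZ : Measurable Z)
    (φ : 𝒳 → ℝ) (hφ : Measurable φ)
    (k : 𝒵 → 𝒵 → ℝ) (hk_meas : Measurable (Function.uncurry k))
    (C : ℝ) (hk_bdd : ∀ z z', |k z z'| ≤ C)
    (hφint : Integrable (fun ω => φ (X ω)) P)
    (m : 𝒵 → ℝ) (hm : Measurable m)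
    (hcond : (fun ω => m (Z ω)) =ᵐ[P]
      P[(fun ω => φ (X ω)) | MeasurableSpace.comap Z inferInstance]) :
    ∫ ω, ∫ ω', φ (X ω) * (k (Z ω) (Z ω') * φ (X ω')) ∂P ∂P
      = ∫ z, ∫ z', m z * (k z z' * m z') ∂(P.map Z) ∂(P.map Z) := by
  -- integrability of m ∘ Z
  have hmZ_int : Integrable (fun ω => m (Z ω)) P :=
    (integrable_condExp).congr hcond.symm
  have hmap : Integrable m (P.map Z) :=
    (integrable_map_measure hm.aestronglyMeasurable hZ.aemeasurable).mpr hmZ_int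
  -- inner step
  have hinner : ∀ z : 𝒵, ∫ ω', k z (Z ω') * φ (X ω') ∂P = ∫ z', k z z' * m z' ∂(P.map Z) := by
    intro z
    have hkz : Measurable (k z) := hk_meas.comp (measurable_prodMk_left)
    rw [aux_pullout P Z hZ _ hφint m hcond (k z) hkz C (fun z' => hk_bdd z z')]
    rw [integral_map hZ.aemeasurable ((hkz.mul hm).aestronglyMeasurable) (f := fun z' => k z z' * m z')]
  -- define F
  set F : 𝒵 → ℝ := fun z => ∫ z', k z z' * m z' ∂(P.map Z) with hF
  have hFmeas : Measurable F := by
    apply StronglyMeasurable.measurable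
    apply MeasureTheory.StronglyMeasurable.integral_prod_right' (f := fun p : 𝒵 × 𝒵 => k p.1 p.2 * m p.2)
    exact (hk_meas.mul (hm.comp measurable_snd)).stronglyMeasurable
  have hFbdd : ∀ z, |F z| ≤ C * ∫ z', |m z'| ∂(P.map Z) := by
    intro z
    calc |F z| ≤ ∫ z', |k z z'| * |m z'| ∂(P.map Z) := by
          simpa [Real.norm_eq_abs, abs_mul] using
            norm_integral_le_integral_norm (fun z' => k z z' * m z') (μ := P.map Z)
      _ ≤ ∫ z', C * |m z'| ∂(P.map Z) := by
          refine integral_mono_of_nonneg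
            (Filter.Eventually.of_forall fun z' => mul_nonneg (abs_nonneg _) (abs_nonneg _))
            (hmap.abs.const_mul C) (Filter.Eventually.of_forall fun z' => ?_)
          exact mul_le_mul_of_nonneg_right (hk_bdd z z') (abs_nonneg _)
      _ = C * ∫ z', |m z'| ∂(P.map Z) := integral_const_mul C _
  -- main calc
  have hstep1 : ∀ ω, ∫ ω', φ (X ω) * (k (Z ω) (Z ω') * φ (X ω')) ∂P = F (Z ω) * φ (X ω) := by
    intro ω
    rw [integral_const_mul, hinner (Z ω), mul_comm]
  simp_rw [hstep1]
  rw [aux_pullout P Z hZ _ hφint m hcond F hFmeas _ hFbdd]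
  have hchg : ∫ ω, F (Z ω) * m (Z ω) ∂P = ∫ z, F z * m z ∂(P.map Z) :=
    (integral_map hZ.aemeasurable ((hFmeas.mul hm).aestronglyMeasurable)
      (f := fun z => F z * m z)).symm
  rw [hchg]
  refine integral_congr_ae (Filter.Eventually.of_forall fun z => ?_)
  show F z * m z = ∫ z', m z * (k z z' * m z') ∂(P.map Z)
  rw [hF, mul_comm, ← integral_const_mul]
end

section
/- (Theorem 1, sufficiency of the instrument space, integral form.) Suppose k : 𝒵 × 𝒵 → ℝ is bounded, measurable, and integrally strictly positive definite (ISPD) with respect to P_Z, and suppose E[φ(X)²] < ∞. Then E[φ(X) k(Z,Z') φ(X')] = 0 if and only if m = 0 P_Z-almost everywhere, i.e. if and only if E[φ(X) | σ(Z)] = 0 almost surely. -/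
open MeasureTheory

/-- **Theorem 1, integral form.** For a bounded, measurable kernel `k`
that is integrally strictly positive definite (ISPD) w.r.t. `P_Z`, and `E[φ(X)²] < ∞`,
the double expectation `E[φ(X) k(Z,Z') φ(X')]` vanishes iff the conditional mean
function `m` vanishes `P_Z`-a.e., iff `E[φ(X) | σ(Z)] = 0` almost surely. -/
theorem statement_2
    {Ω 𝒳 𝒵 : Type*} [MeasurableSpace Ω] [MeasurableSpace 𝒳] [MeasurableSpace 𝒵]
    (P : Measure Ω) [IsProbabilityMeasure P]
    (X : Ω → 𝒳) (Z : Ω → 𝒵) (hX : Measurable X) (hZ : Measurable Z)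
    (φ : 𝒳 → ℝ) (hφ : Measurable φ)
    (k : 𝒵 → 𝒵 → ℝ) (hk_meas : Measurable (Function.uncurry k))
    (C : ℝ) (hk_bdd : ∀ z z', |k z z'| ≤ C)
    (hispd : ∀ g : 𝒵 → ℝ, Measurable g →
      Integrable (fun z => g z ^ 2) (P.map Z) → 0 < ∫ z, g z ^ 2 ∂(P.map Z) →
      0 < ∫ z, ∫ z', g z * (k z z' * g z') ∂(P.map Z) ∂(P.map Z))
    (hφsq : Integrable (fun ω => φ (X ω) ^ 2) P)
    (m : 𝒵 → ℝ) (hm : Measurable m)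
    (hcond : (fun ω => m (Z ω)) =ᵐ[P]
      P[(fun ω => φ (X ω)) | MeasurableSpace.comap Z inferInstance]) :
    ((∫ ω, ∫ ω', φ (X ω) * (k (Z ω) (Z ω') * φ (X ω')) ∂P ∂P) = 0
        ↔ m =ᵐ[P.map Z] 0) ∧
      ((∫ ω, ∫ ω', φ (X ω) * (k (Z ω) (Z ω') * φ (X ω')) ∂P ∂P) = 0
        ↔ P[(fun ω => φ (X ω)) | MeasurableSpace.comap Z inferInstance] =ᵐ[P] 0) := by
  classical
  set f : Ω → ℝ := fun ω => φ (X ω) with hf_def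
  have hfm : Measurable f := hφ.comp hX
  have hmle : MeasurableSpace.comap Z inferInstance ≤ ‹MeasurableSpace Ω› := hZ.comap_le
  haveI : SigmaFinite (P.trim hmle) := inferInstance
  haveI : IsProbabilityMeasure (P.map Z) := Measure.isProbabilityMeasure_map hZ.aemeasurable
  set C' : ℝ := max C 0 with hC'_def
  have hC'0 : 0 ≤ C' := le_max_right _ _
  have hk' : ∀ z z', |k z z'| ≤ C' := fun z z' => (hk_bdd z z').trans (le_max_left _ _)
  have hfmem2 : MemLp f 2 P :=
    (memLp_two_iff_integrable_sq hfm.aestronglyMeasurable).2 hφsq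
  have hfint : Integrable f P := hfmem2.integrable one_le_two
  -- The conditional expectation is in L²
  have hcondmem2 : MemLp (P[f | MeasurableSpace.comap Z inferInstance]) 2 P := by
    set fL : Lp ℝ 2 P := hfmem2.toLp f with hfL_def
    have hgmem : MemLp ((condExpL2 ℝ ℝ hmle fL : Lp ℝ 2 P) : Ω → ℝ) 2 P := Lp.memLp _
    have hgae : ((condExpL2 ℝ ℝ hmle fL : Lp ℝ 2 P) : Ω → ℝ)
        =ᵐ[P] P[f | MeasurableSpace.comap Z inferInstance] := by
      refine ae_eq_condExp_of_forall_setIntegral_eq hmle hfint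
        (fun s _ _ => (hgmem.integrable one_le_two).integrableOn)
        (fun s hs hμs => ?_) (aestronglyMeasurable_condExpL2 hmle fL)
      rw [integral_condExpL2_eq hmle fL hs hμs.ne]
      exact setIntegral_congr_ae (hmle s hs) ((hfmem2.coeFn_toLp).mono fun ω hω _ => hω)
    exact hgmem.ae_eq hgae
  have hmZmem2 : MemLp (fun ω => m (Z ω)) 2 P := hcondmem2.ae_eq hcond.symm
  have hmZm : Measurable fun ω => m (Z ω) := hm.comp hZ
  have hmZint : Integrable (fun ω => m (Z ω)) P := hmZmem2.integrable one_le_two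
  have hmZsqint : Integrable (fun ω => m (Z ω) ^ 2) P :=
    (memLp_two_iff_integrable_sq hmZm.aestronglyMeasurable).1 hmZmem2
  have hmsqint : Integrable (fun z => m z ^ 2) (P.map Z) :=
    (integrable_map_measure (hm.pow_const 2).aestronglyMeasurable
      hZ.aemeasurable).2 hmZsqint
  -- pairing lemma: replacing f by m ∘ Z against bounded σ(Z)-measurable test functions
  have pairing : ∀ (b : 𝒵 → ℝ), Measurable b → ∀ B : ℝ, (∀ z, |b z| ≤ B) →
      ∫ ω, f ω * b (Z ω) ∂P = ∫ ω, m (Z ω) * b (Z ω) ∂P := by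
    intro b hb B hB
    have hZm' : Measurable[MeasurableSpace.comap Z inferInstance] Z :=
      Measurable.of_comap_le le_rfl
    have hbZsm : StronglyMeasurable[MeasurableSpace.comap Z inferInstance]
        (fun ω => b (Z ω)) := (hb.comp hZm').stronglyMeasurable
    have h1 : Integrable ((fun ω => b (Z ω)) * f) P := by
      have := hfint.bdd_mul (hb.comp hZ).aestronglyMeasurable
        (Filter.Eventually.of_forall fun ω => by simpa [Real.norm_eq_abs] using hB (Z ω))
      simpa [Pi.mul_def] using this
    have h2 := condExp_mul_of_stronglyMeasurable_left (μ := P) hbZsm h1 hfint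
    calc ∫ ω, f ω * b (Z ω) ∂P
        = ∫ ω, ((fun ω => b (Z ω)) * f) ω ∂P := by
          simp [Pi.mul_apply, mul_comm]
      _ = ∫ ω, (P[(fun ω => b (Z ω)) * f | MeasurableSpace.comap Z inferInstance]) ω ∂P :=
          (integral_condExp hmle).symm
      _ = ∫ ω, m (Z ω) * b (Z ω) ∂P := by
          refine integral_congr_ae ?_
          filter_upwards [h2, hcond] with ω h2ω hcω
          rw [h2ω, Pi.mul_apply, ← hcω, mul_comm]
  -- the functions F and G
  set F : 𝒵 → ℝ := fun z => ∫ ω', k z (Z ω') * f ω' ∂P with hF_def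
  have hFmeas : Measurable F := by
    have h : StronglyMeasurable fun p : 𝒵 × Ω => k p.1 (Z p.2) * f p.2 :=
      ((hk_meas.comp (measurable_fst.prodMk (hZ.comp measurable_snd))).mul
        (hfm.comp measurable_snd)).stronglyMeasurable
    exact h.integral_prod_right'.measurable
  have habs_int : Integrable (fun ω => |f ω|) P := hfint.abs
  have hFbdd : ∀ z, |F z| ≤ C' * ∫ ω, |f ω| ∂P := by
    intro z
    have h1 : |F z| ≤ ∫ ω', |k z (Z ω') * f ω'| ∂P := by
      simpa only [Real.norm_eq_abs] using
        norm_integral_le_integral_norm (fun ω' => k z (Z ω') * f ω') (μ := P)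
    refine h1.trans ?_
    rw [← integral_const_mul]
    refine integral_mono ?_ (habs_int.const_mul C') fun ω' => ?_
    · have := hfint.bdd_mul ((hk_meas.comp (measurable_prodMk_left.comp hZ)).comp
        measurable_id).aestronglyMeasurable
        (Filter.Eventually.of_forall fun ω => by simpa [Real.norm_eq_abs] using hk' z (Z ω))
      exact this.abs
    · rw [abs_mul]
      exact mul_le_mul_of_nonneg_right (hk' z (Z ω')) (abs_nonneg _)
  set G : 𝒵 → ℝ := fun z' => ∫ ω, m (Z ω) * k (Z ω) z' ∂P with hG_def
  have hGmeas : Measurable G := by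
    have h : StronglyMeasurable fun p : 𝒵 × Ω => m (Z p.2) * k (Z p.2) p.1 :=
      ((hm.comp (hZ.comp measurable_snd)).mul
        (hk_meas.comp ((hZ.comp measurable_snd).prodMk measurable_fst))).stronglyMeasurable
    exact h.integral_prod_right'.measurable
  have hmabs_int : Integrable (fun ω => |m (Z ω)|) P := hmZint.abs
  have hGbdd : ∀ z', |G z'| ≤ C' * ∫ ω, |m (Z ω)| ∂P := by
    intro z'
    have h1 : |G z'| ≤ ∫ ω, |m (Z ω) * k (Z ω) z'| ∂P := by
      simpa only [Real.norm_eq_abs] using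
        norm_integral_le_integral_norm (fun ω => m (Z ω) * k (Z ω) z') (μ := P)
    refine h1.trans ?_
    rw [← integral_const_mul]
    refine integral_mono ?_ (hmabs_int.const_mul C') fun ω => ?_
    · have := hmZint.bdd_mul
        ((hk_meas.comp ((hZ.prodMk measurable_const)))).aestronglyMeasurable
        (Filter.Eventually.of_forall fun ω => by simpa [Real.norm_eq_abs] using hk' (Z ω) z')
      have h2 : Integrable (fun ω => k (Z ω) z' * m (Z ω)) P := this
      have h3 : (fun ω => |m (Z ω) * k (Z ω) z'|) = fun ω => |k (Z ω) z' * m (Z ω)| := by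
        funext ω; rw [mul_comm]
      rw [h3]; exact h2.abs
    · rw [abs_mul, mul_comm (|m (Z ω)|)]
      exact mul_le_mul_of_nonneg_right (hk' (Z ω) z') (abs_nonneg _)
  -- the key identity
  have key : (∫ ω, ∫ ω', f ω * (k (Z ω) (Z ω') * f ω') ∂P ∂P)
      = ∫ z, ∫ z', m z * (k z z' * m z') ∂(P.map Z) ∂(P.map Z) := by
    have step1 : (∫ ω, ∫ ω', f ω * (k (Z ω) (Z ω') * f ω') ∂P ∂P)
        = ∫ ω, f ω * F (Z ω) ∂P := by
      simp only [hF_def, integral_const_mul]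
    have step2 : (∫ ω, f ω * F (Z ω) ∂P) = ∫ ω, m (Z ω) * F (Z ω) ∂P :=
      pairing F hFmeas _ hFbdd
    have step3 : (∫ ω, m (Z ω) * F (Z ω) ∂P)
        = ∫ ω, ∫ ω', m (Z ω) * (k (Z ω) (Z ω') * f ω') ∂P ∂P := by
      simp only [hF_def, integral_const_mul]
    -- swap
    have hswap1int : Integrable (Function.uncurry
        fun ω ω' => m (Z ω) * (k (Z ω) (Z ω') * f ω')) (P.prod P) := by
      have hmaj : Integrable (fun p : Ω × Ω => C' * (|m (Z p.1)| * |f p.2|)) (P.prod P) :=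
        (hmabs_int.mul_prod habs_int).const_mul C'
      have hmeas : Measurable (Function.uncurry
          fun ω ω' => m (Z ω) * (k (Z ω) (Z ω') * f ω')) :=
        (hm.comp (hZ.comp measurable_fst)).mul
          ((hk_meas.comp ((hZ.comp measurable_fst).prodMk (hZ.comp measurable_snd))).mul
            (hfm.comp measurable_snd))
      refine hmaj.mono hmeas.aestronglyMeasurable (Filter.Eventually.of_forall fun p => ?_)
      simp only [Function.uncurry, Real.norm_eq_abs]
      rw [abs_mul, abs_mul, abs_of_nonneg (by positivity : (0:ℝ) ≤ C' * (|m (Z p.1)| * |f p.2|))]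
      calc |m (Z p.1)| * (|k (Z p.1) (Z p.2)| * |f p.2|)
          ≤ |m (Z p.1)| * (C' * |f p.2|) :=
            mul_le_mul_of_nonneg_left
              (mul_le_mul_of_nonneg_right (hk' _ _) (abs_nonneg _)) (abs_nonneg _)
        _ = C' * (|m (Z p.1)| * |f p.2|) := by ring
    have step4 : (∫ ω, ∫ ω', m (Z ω) * (k (Z ω) (Z ω') * f ω') ∂P ∂P)
        = ∫ ω', ∫ ω, m (Z ω) * (k (Z ω) (Z ω') * f ω') ∂P ∂P :=
      integral_integral_swap hswap1int
    have step5 : (∫ ω', ∫ ω, m (Z ω) * (k (Z ω) (Z ω') * f ω') ∂P ∂P)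
        = ∫ ω', f ω' * G (Z ω') ∂P := by
      refine integral_congr_ae (Filter.Eventually.of_forall fun ω' => ?_)
      show (∫ ω, m (Z ω) * (k (Z ω) (Z ω') * f ω') ∂P) = f ω' * G (Z ω')
      have : (fun ω => m (Z ω) * (k (Z ω) (Z ω') * f ω'))
          = fun ω => f ω' * (m (Z ω) * k (Z ω) (Z ω')) := by
        funext ω; ring
      rw [this, integral_const_mul]
    have step6 : (∫ ω', f ω' * G (Z ω') ∂P) = ∫ ω', m (Z ω') * G (Z ω') ∂P :=
      pairing G hGmeas _ hGbdd
    have step7 : (∫ ω', m (Z ω') * G (Z ω') ∂P)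
        = ∫ ω', ∫ ω, m (Z ω') * (m (Z ω) * k (Z ω) (Z ω')) ∂P ∂P := by
      simp only [hG_def, integral_const_mul]
    have hswap2int : Integrable (Function.uncurry
        fun ω' ω => m (Z ω') * (m (Z ω) * k (Z ω) (Z ω'))) (P.prod P) := by
      have hmaj : Integrable (fun p : Ω × Ω => C' * (|m (Z p.1)| * |m (Z p.2)|)) (P.prod P) :=
        (hmabs_int.mul_prod hmabs_int).const_mul C'
      have hmeas : Measurable (Function.uncurry
          fun ω' ω => m (Z ω') * (m (Z ω) * k (Z ω) (Z ω'))) :=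
        (hm.comp (hZ.comp measurable_fst)).mul
          ((hm.comp (hZ.comp measurable_snd)).mul
            (hk_meas.comp ((hZ.comp measurable_snd).prodMk (hZ.comp measurable_fst))))
      refine hmaj.mono hmeas.aestronglyMeasurable (Filter.Eventually.of_forall fun p => ?_)
      simp only [Function.uncurry, Real.norm_eq_abs]
      rw [abs_mul, abs_mul,
        abs_of_nonneg (by positivity : (0:ℝ) ≤ C' * (|m (Z p.1)| * |m (Z p.2)|))]
      calc |m (Z p.1)| * (|m (Z p.2)| * |k (Z p.2) (Z p.1)|)
          ≤ |m (Z p.1)| * (|m (Z p.2)| * C') :=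
            mul_le_mul_of_nonneg_left
              (mul_le_mul_of_nonneg_left (hk' _ _) (abs_nonneg _)) (abs_nonneg _)
        _ = C' * (|m (Z p.1)| * |m (Z p.2)|) := by ring
    have step8 : (∫ ω', ∫ ω, m (Z ω') * (m (Z ω) * k (Z ω) (Z ω')) ∂P ∂P)
        = ∫ ω, ∫ ω', m (Z ω') * (m (Z ω) * k (Z ω) (Z ω')) ∂P ∂P :=
      integral_integral_swap hswap2int
    have step9 : (∫ ω, ∫ ω', m (Z ω') * (m (Z ω) * k (Z ω) (Z ω')) ∂P ∂P)
        = ∫ ω, ∫ ω', m (Z ω) * (k (Z ω) (Z ω') * m (Z ω')) ∂P ∂P := by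
      refine integral_congr_ae (Filter.Eventually.of_forall fun ω => ?_)
      refine integral_congr_ae (Filter.Eventually.of_forall fun ω' => ?_)
      ring
    -- transfer to the pushforward measure
    have hinner_meas : ∀ z : 𝒵, Measurable fun z' => m z * (k z z' * m z') := by
      intro z
      exact measurable_const.mul
        ((hk_meas.comp (measurable_const.prodMk measurable_id)).mul hm)
    have step10 : (∫ ω, ∫ ω', m (Z ω) * (k (Z ω) (Z ω') * m (Z ω')) ∂P ∂P)
        = ∫ ω, ∫ z', m (Z ω) * (k (Z ω) z' * m z') ∂(P.map Z) ∂P := by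
      refine integral_congr_ae (Filter.Eventually.of_forall fun ω => ?_)
      show (∫ ω', m (Z ω) * (k (Z ω) (Z ω') * m (Z ω')) ∂P)
          = ∫ z', m (Z ω) * (k (Z ω) z' * m z') ∂(P.map Z)
      exact (integral_map hZ.aemeasurable (hinner_meas (Z ω)).aestronglyMeasurable).symm
    have houter_meas : Measurable fun z => ∫ z', m z * (k z z' * m z') ∂(P.map Z) := by
      have h : StronglyMeasurable fun p : 𝒵 × 𝒵 => m p.1 * (k p.1 p.2 * m p.2) :=
        ((hm.comp measurable_fst).mul
          (hk_meas.mul (hm.comp measurable_snd))).stronglyMeasurable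
      exact h.integral_prod_right'.measurable
    have step11 : (∫ ω, ∫ z', m (Z ω) * (k (Z ω) z' * m z') ∂(P.map Z) ∂P)
        = ∫ z, ∫ z', m z * (k z z' * m z') ∂(P.map Z) ∂(P.map Z) :=
      (integral_map hZ.aemeasurable houter_meas.aestronglyMeasurable).symm
    rw [step1, step2, step3, step4, step5, step6, step7, step8, step9, step10, step11]
  -- the squared integral
  have hsq_eq : (∫ z, m z ^ 2 ∂(P.map Z)) = ∫ ω, m (Z ω) ^ 2 ∂P :=
    integral_map hZ.aemeasurable (hm.pow_const 2).aestronglyMeasurable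
  -- first iff
  have main : (∫ ω, ∫ ω', f ω * (k (Z ω) (Z ω') * f ω') ∂P ∂P) = 0 ↔ m =ᵐ[P.map Z] 0 := by
    constructor
    · intro hD0
      by_contra hne
      have hsqne : (∫ z, m z ^ 2 ∂(P.map Z)) ≠ 0 := by
        intro h0
        have := (integral_eq_zero_iff_of_nonneg_ae
          (Filter.Eventually.of_forall fun z => sq_nonneg (m z)) hmsqint).1 h0
        exact hne (this.mono fun z hz => by
          have : m z ^ 2 = 0 := hz
          simpa using pow_eq_zero_iff (n := 2) (by norm_num) |>.1 this)
      have hsqpos : 0 < ∫ z, m z ^ 2 ∂(P.map Z) :=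
        lt_of_le_of_ne (integral_nonneg fun z => sq_nonneg _) (Ne.symm hsqne)
      have := hispd m hm hmsqint hsqpos
      rw [← key] at this
      exact this.ne' hD0
    · intro hm0
      rw [key]
      have : (fun z => ∫ z', m z * (k z z' * m z') ∂(P.map Z)) =ᵐ[P.map Z] 0 := by
        filter_upwards [hm0] with z hz
        simp [hz]
      rw [integral_congr_ae this]
      simp
  have htrans : (m =ᵐ[P.map Z] 0)
      ↔ P[f | MeasurableSpace.comap Z inferInstance] =ᵐ[P] 0 := by
    have h1 : (m =ᵐ[P.map Z] 0) ↔ (fun ω => m (Z ω)) =ᵐ[P] 0 := by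
      exact ae_map_iff (μ := P) (p := fun z => m z = 0) hZ.aemeasurable
        (measurableSet_eq_fun hm measurable_const)
    rw [h1]
    constructor
    · intro h
      exact (hcond.symm.trans h :)
    · intro h
      exact (hcond.trans h :)
  exact ⟨main, main.trans htrans⟩
end

section
/- (Theorem 1, feature-map form.) Suppose sup_{z ∈ 𝒵} ‖Φ(z)‖_H < ∞, the kernel k(z,z') = ⟨Φ(z), Φ(z')⟩_H is integrally strictly positive definite (ISPD) with respect to P_Z, and E[φ(X)²] < ∞. Then sup_{h ∈ H, ‖h‖_H = 1} ( E[φ(X) ⟨Φ(Z), h⟩_H] )² = 0 if and only if E[φ(X) | σ(Z)] = 0 almost surely. -/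
open MeasureTheory
open scoped RealInnerProductSpace

/-- **Theorem 1, feature-map form.** If `sup_z ‖Φ(z)‖ < ∞`, the kernel
`k(z,z') = ⟪Φ z, Φ z'⟫` is ISPD w.r.t. `P_Z`, and `E[φ(X)²] < ∞`, then
`sup_{‖h‖=1} (E[φ(X) ⟪Φ(Z), h⟫])² = 0` iff `E[φ(X) | σ(Z)] = 0` almost surely. -/
theorem statement_3
    {Ω 𝒳 𝒵 : Type*} [MeasurableSpace Ω] [MeasurableSpace 𝒳] [MeasurableSpace 𝒵]
    (P : Measure Ω) [IsProbabilityMeasure P]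
    (X : Ω → 𝒳) (Z : Ω → 𝒵) (hX : Measurable X) (hZ : Measurable Z)
    (φ : 𝒳 → ℝ) (hφ : Measurable φ)
    {H : Type*} [NormedAddCommGroup H] [InnerProductSpace ℝ H] [Nontrivial H]
    (Φ : 𝒵 → H) (hΦ : StronglyMeasurable Φ)
    (C : ℝ) (hΦ_bdd : ∀ z, ‖Φ z‖ ≤ C)
    (hispd : ∀ g : 𝒵 → ℝ, Measurable g →
      Integrable (fun z => g z ^ 2) (P.map Z) → 0 < ∫ z, g z ^ 2 ∂(P.map Z) →
      0 < ∫ z, ∫ z', g z * (⟪Φ z, Φ z'⟫ * g z') ∂(P.map Z) ∂(P.map Z))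
    (hφsq : Integrable (fun ω => φ (X ω) ^ 2) P) :
    sSup {r : ℝ | ∃ h : H, ‖h‖ = 1 ∧
        r = (∫ ω, φ (X ω) * ⟪Φ (Z ω), h⟫ ∂P) ^ 2} = 0
      ↔ P[(fun ω => φ (X ω)) | MeasurableSpace.comap Z inferInstance] =ᵐ[P] 0 := by
  classical
  have hm : MeasurableSpace.comap Z inferInstance ≤ ‹MeasurableSpace Ω› := hZ.comap_le
  haveI : SigmaFinite (P.trim hm) := by
    haveI := isFiniteMeasure_trim (μ := P) hm
    infer_instance
  set fY : Ω → ℝ := fun ω => φ (X ω) with hfY_def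
  have hfY_meas : Measurable fY := hφ.comp hX
  have hfY_mem2 : MemLp fY 2 P :=
    (memLp_two_iff_integrable_sq hfY_meas.aestronglyMeasurable).2 hφsq
  have hfY_int : Integrable fY P := hfY_mem2.integrable one_le_two
  have hΩ : Nonempty Ω := by
    by_contra hne
    rw [not_nonempty_iff] at hne
    have h1 : P Set.univ = 1 := measure_univ
    rw [Set.univ_eq_empty_iff.mpr hne, measure_empty] at h1
    exact zero_ne_one h1
  have hC : 0 ≤ C := (norm_nonneg _).trans (hΦ_bdd (Z hΩ.some))
  have hb_sm : ∀ h : H, StronglyMeasurable[MeasurableSpace.comap Z inferInstance] fun ω => ⟪Φ (Z ω), h⟫ := fun h =>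
    (hΦ.inner stronglyMeasurable_const).comp_measurable (comap_measurable Z)
  have hb_bdd : ∀ (h : H) (ω : Ω), ‖⟪Φ (Z ω), h⟫‖ ≤ C * ‖h‖ := fun h ω => by
    refine (abs_real_inner_le_norm _ _).trans ?_
    exact mul_le_mul_of_nonneg_right (hΦ_bdd _) (norm_nonneg _)
  set ψ : Ω → ℝ := P[fY|MeasurableSpace.comap Z inferInstance] with hψ_def
  have hψ_int : Integrable ψ P := integrable_condExp
  -- Key pull-out identity
  have hIψ : ∀ h : H, ∫ ω, fY ω * ⟪Φ (Z ω), h⟫ ∂P = ∫ ω, ψ ω * ⟪Φ (Z ω), h⟫ ∂P := by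
    intro h
    have hpull := condExp_stronglyMeasurable_mul_of_bound hm (hb_sm h) hfY_int (C * ‖h‖)
      (Filter.Eventually.of_forall (hb_bdd h))
    have hint : Integrable ((fun ω => ⟪Φ (Z ω), h⟫) * fY) P :=
      hfY_int.bdd_mul ((hb_sm h).mono hm).aestronglyMeasurable (c := C * ‖h‖) (Filter.Eventually.of_forall (hb_bdd h))
    calc ∫ ω, fY ω * ⟪Φ (Z ω), h⟫ ∂P
        = ∫ ω, ((fun ω => ⟪Φ (Z ω), h⟫) * fY) ω ∂P := by
          simp only [Pi.mul_apply]; congr 1; funext ω; ring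
      _ = ∫ ω, (P[(fun ω => ⟪Φ (Z ω), h⟫) * fY|MeasurableSpace.comap Z inferInstance]) ω ∂P := (integral_condExp hm).symm
      _ = ∫ ω, ((fun ω => ⟪Φ (Z ω), h⟫) * ψ) ω ∂P := integral_congr_ae hpull
      _ = ∫ ω, ψ ω * ⟪Φ (Z ω), h⟫ ∂P := by
          simp only [Pi.mul_apply]; congr 1; funext ω; ring
  constructor
  · -- forward direction
    intro hsup
    -- the set is bounded above
    have hS_bdd : BddAbove {r : ℝ | ∃ h : H, ‖h‖ = 1 ∧
        r = (∫ ω, fY ω * ⟪Φ (Z ω), h⟫ ∂P) ^ 2} := by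
      refine ⟨(∫ ω, |fY ω| * C ∂P) ^ 2, ?_⟩
      rintro r ⟨h, hh, rfl⟩
      have hint : Integrable (fun ω => fY ω * ⟪Φ (Z ω), h⟫) P := by
        have := hfY_int.bdd_mul ((hb_sm h).mono hm).aestronglyMeasurable (c := C * ‖h‖) (Filter.Eventually.of_forall (hb_bdd h))
        exact this.congr (Filter.Eventually.of_forall fun ω => by simp [mul_comm])
      have h1 : |∫ ω, fY ω * ⟪Φ (Z ω), h⟫ ∂P| ≤ ∫ ω, |fY ω| * C ∂P := by
        refine le_trans ?_ (integral_mono hint.abs (hfY_int.abs.mul_const C) ?_)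
        · simpa only [Real.norm_eq_abs] using norm_integral_le_integral_norm
            (fun ω => fY ω * ⟪Φ (Z ω), h⟫) (μ := P)
        · intro ω
          dsimp only
          rw [abs_mul]
          refine mul_le_mul_of_nonneg_left ?_ (abs_nonneg _)
          simpa [Real.norm_eq_abs, hh] using hb_bdd h ω
      calc (∫ ω, fY ω * ⟪Φ (Z ω), h⟫ ∂P) ^ 2
          = |∫ ω, fY ω * ⟪Φ (Z ω), h⟫ ∂P| ^ 2 := (sq_abs _).symm
        _ ≤ (∫ ω, |fY ω| * C ∂P) ^ 2 := pow_le_pow_left₀ (abs_nonneg _) h1 2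
    have hI1 : ∀ h : H, ‖h‖ = 1 → ∫ ω, fY ω * ⟪Φ (Z ω), h⟫ ∂P = 0 := by
      intro h hh
      have hmem : (∫ ω, fY ω * ⟪Φ (Z ω), h⟫ ∂P) ^ 2 ∈ {r : ℝ | ∃ h : H, ‖h‖ = 1 ∧
          r = (∫ ω, fY ω * ⟪Φ (Z ω), h⟫ ∂P) ^ 2} := ⟨h, hh, rfl⟩
      have hle : (∫ ω, fY ω * ⟪Φ (Z ω), h⟫ ∂P) ^ 2 ≤ 0 := by
        have := le_csSup hS_bdd hmem
        rwa [hsup] at this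
      have := le_antisymm hle (sq_nonneg _)
      exact pow_eq_zero_iff (two_ne_zero) |>.1 this
    have hI0all : ∀ h : H, ∫ ω, fY ω * ⟪Φ (Z ω), h⟫ ∂P = 0 := by
      intro h
      rcases eq_or_ne h 0 with rfl | hh0
      · simp
      · have hn : ‖h‖ ≠ 0 := norm_ne_zero_iff.2 hh0
        have hnorm : ‖(‖h‖⁻¹ • h)‖ = 1 := by
          rw [norm_smul, norm_inv, norm_norm, inv_mul_cancel₀ hn]
        have h0 := hI1 _ hnorm
        have hrw : (fun ω => fY ω * ⟪Φ (Z ω), ‖h‖⁻¹ • h⟫)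
            = fun ω => ‖h‖⁻¹ * (fY ω * ⟪Φ (Z ω), h⟫) := by
          funext ω; rw [real_inner_smul_right]; ring
        rw [hrw, integral_const_mul] at h0
        exact (mul_eq_zero.1 h0).resolve_left (inv_ne_zero hn)
    -- conditional distribution and its mean
    set κ := ProbabilityTheory.condDistrib fY Z P with hκ_def
    set g : 𝒵 → ℝ := fun z => ∫ y, y ∂κ z with hg_def
    have hg_sm : StronglyMeasurable g := by
      have huncurry : StronglyMeasurable (Function.uncurry fun (_ : 𝒵) (y : ℝ) => y) :=
        measurable_snd.stronglyMeasurable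
      exact huncurry.integral_kernel_prod_right
    have hψg : ψ =ᵐ[P] fun ω => g (Z ω) :=
      ProbabilityTheory.condExp_ae_eq_integral_condDistrib' hZ hfY_int
    -- ∫ g(z) ⟪Φ z, h⟫ dμ = 0 for all h
    have hzero' : ∀ h : H, ∫ z, g z * ⟪Φ z, h⟫ ∂(P.map Z) = 0 := by
      intro h
      have hmeas : AEStronglyMeasurable (fun z => g z * ⟪Φ z, h⟫) (P.map Z) :=
        (hg_sm.mul (hΦ.inner stronglyMeasurable_const)).aestronglyMeasurable
      rw [integral_map hZ.aemeasurable hmeas]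
      have heq : (fun ω => g (Z ω) * ⟪Φ (Z ω), h⟫) =ᵐ[P]
          fun ω => ψ ω * ⟪Φ (Z ω), h⟫ := by
        filter_upwards [hψg] with ω hw
        rw [hw]
      rw [integral_congr_ae heq, ← hIψ h, hI0all h]
    by_contra hne
    -- integrability of g², via Jensen (variance nonneg)
    have h_meas_pair : Measurable fun ω => (Z ω, fY ω) := hZ.prodMk hfY_meas
    have hsq_ν : Integrable (fun p : 𝒵 × ℝ => p.2 ^ 2) (P.map fun ω => (Z ω, fY ω)) := by
      rw [integrable_map_measure
        ((measurable_snd.pow_const 2).aestronglyMeasurable) h_meas_pair.aemeasurable]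
      exact hφsq
    have hG_int : Integrable (fun z => ∫ y, y ^ 2 ∂κ z) (P.map Z) := by
      have := MeasureTheory.Integrable.integral_condDistrib_map (μ := P) (X := Z) (Y := fY)
        hfY_meas.aemeasurable hsq_ν
      exact this
    have hae_int2 : ∀ᵐ z ∂(P.map Z), Integrable (fun y : ℝ => y ^ 2) (κ z) := by
      have := hsq_ν.condDistrib_ae_map (μ := P) (X := Z) hfY_meas.aemeasurable
      exact this
    have hae_g_le : ∀ᵐ z ∂(P.map Z), g z ^ 2 ≤ ∫ y, y ^ 2 ∂κ z := by
      filter_upwards [hae_int2] with z hz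
      haveI : IsProbabilityMeasure (κ z) := by infer_instance
      have hmem : MemLp (fun y : ℝ => y) 2 (κ z) :=
        (memLp_two_iff_integrable_sq measurable_id.aestronglyMeasurable).2 hz
      have hv := ProbabilityTheory.variance_nonneg (fun y : ℝ => y) (κ z)
      rw [ProbabilityTheory.variance_eq_sub hmem] at hv
      have h1 : (∫ y, ((fun y : ℝ => y) ^ 2) y ∂κ z) = ∫ y, y ^ 2 ∂κ z := by
        congr 1
      have h2 : (∫ y, y ∂κ z) = g z := rfl
      rw [h1, h2] at hv
      linarith
    have hg2_int : Integrable (fun z => g z ^ 2) (P.map Z) := by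
      refine hG_int.mono ((hg_sm.measurable.pow_const 2).aestronglyMeasurable) ?_
      filter_upwards [hae_g_le] with z hzle
      have hG0 : 0 ≤ ∫ y, y ^ 2 ∂κ z := integral_nonneg fun y => sq_nonneg y
      rw [Real.norm_eq_abs, Real.norm_eq_abs, abs_of_nonneg (sq_nonneg _), abs_of_nonneg hG0]
      exact hzle
    have hgZ2_int : Integrable (fun ω => g (Z ω) ^ 2) P := by
      have := (integrable_map_measure
        ((hg_sm.measurable.pow_const 2).aestronglyMeasurable) hZ.aemeasurable).1 hg2_int
      exact this
    have hψ2_int : Integrable (fun ω => ψ ω ^ 2) P := by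
      refine hgZ2_int.congr ?_
      filter_upwards [hψg] with ω hw
      rw [hw]
    have hpos : 0 < ∫ z, g z ^ 2 ∂(P.map Z) := by
      have heq : ∫ z, g z ^ 2 ∂(P.map Z) = ∫ ω, ψ ω ^ 2 ∂P := by
        rw [integral_map hZ.aemeasurable ((hg_sm.measurable.pow_const 2).aestronglyMeasurable)]
        refine integral_congr_ae ?_
        filter_upwards [hψg] with ω hw
        rw [hw]
      rw [heq]
      have h0 : 0 ≤ ∫ ω, ψ ω ^ 2 ∂P := integral_nonneg fun ω => sq_nonneg _
      rcases h0.lt_or_eq with h | h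
      · exact h
      · exfalso
        have hz2 : (fun ω => ψ ω ^ 2) =ᵐ[P] 0 :=
          (integral_eq_zero_iff_of_nonneg (fun ω => sq_nonneg _) hψ2_int).1 h.symm
        refine hne ?_
        filter_upwards [hz2] with ω hw
        have : ψ ω ^ 2 = 0 := hw
        have := pow_eq_zero_iff (two_ne_zero) |>.1 this
        simpa using this
    have hD := hispd g hg_sm.measurable hg2_int hpos
    have hDzero : ∫ z, ∫ z', g z * (⟪Φ z, Φ z'⟫ * g z') ∂(P.map Z) ∂(P.map Z) = 0 := by
      have hin : ∀ z, ∫ z', g z * (⟪Φ z, Φ z'⟫ * g z') ∂(P.map Z) = 0 := by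
        intro z
        have hrw : (fun z' => g z * (⟪Φ z, Φ z'⟫ * g z'))
            = fun z' => g z * (g z' * ⟪Φ z', Φ z⟫) := by
          funext z'; rw [real_inner_comm]; ring
        rw [hrw, integral_const_mul, hzero' (Φ z), mul_zero]
      simp [hin]
    rw [hDzero] at hD
    exact absurd hD (lt_irrefl 0)
  · -- backward direction
    intro hψ0
    have hIall0 : ∀ h : H, ∫ ω, fY ω * ⟪Φ (Z ω), h⟫ ∂P = 0 := by
      intro h
      rw [hIψ h]
      have hz : (fun ω => ψ ω * ⟪Φ (Z ω), h⟫) =ᵐ[P] 0 := by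
        filter_upwards [hψ0] with ω hw
        simp only [Pi.zero_apply] at hw ⊢
        rw [hw, zero_mul]
      rw [integral_congr_ae hz]
      simp
    have hSet : {r : ℝ | ∃ h : H, ‖h‖ = 1 ∧
        r = (∫ ω, fY ω * ⟪Φ (Z ω), h⟫ ∂P) ^ 2} = {0} := by
      ext r
      simp only [Set.mem_setOf_eq, Set.mem_singleton_iff]
      constructor
      · rintro ⟨h, hh, rfl⟩
        rw [hIall0 h]; norm_num
      · rintro rfl
        obtain ⟨x, hx⟩ := exists_ne (0 : H)
        have hn : ‖x‖ ≠ 0 := norm_ne_zero_iff.2 hx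
        refine ⟨‖x‖⁻¹ • x, ?_, ?_⟩
        · rw [norm_smul, norm_inv, norm_norm, inv_mul_cancel₀ hn]
        · rw [hIall0]; norm_num
    rw [hSet, csSup_singleton]
end

section
/- (Strong law for V-statistics of bounded kernels.) Let (Z_i)_{i≥1} be an i.i.d. sequence of 𝒵-valued random variables with common law ν, and let f : 𝒵 × 𝒵 → ℝ be a bounded measurable function. Then, almost surely, n^{-2} Σ_{i=1}^n Σ_{j=1}^n f(Z_i, Z_j) → ∫∫ f(z,z') dν(z) dν(z') as n → ∞. -/
open MeasureTheory Filter Topology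

set_option maxHeartbeats 4000000 in
/-- **strong law for V-statistics of bounded kernels.**
For an i.i.d. sequence `Z i` with law `ν` and a bounded measurable
`f : 𝒵 × 𝒵 → ℝ`, almost surely
`n⁻² Σ_{i,j<n} f(Z_i, Z_j) → ∫∫ f dν dν` as `n → ∞`. -/
theorem statement_8
    {Ω 𝒵 : Type*} [MeasurableSpace Ω] [MeasurableSpace 𝒵]
    (P : Measure Ω) [IsProbabilityMeasure P]
    (ν : Measure 𝒵) [IsProbabilityMeasure ν]
    (Z : ℕ → Ω → 𝒵) (hZ_meas : ∀ i, Measurable (Z i))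
    (hZ_indep : ProbabilityTheory.iIndepFun Z P)
    (hZ_law : ∀ i, P.map (Z i) = ν)
    (f : 𝒵 → 𝒵 → ℝ) (hf_meas : Measurable (Function.uncurry f))
    (C : ℝ) (hf_bdd : ∀ z z', |f z z'| ≤ C) :
    ∀ᵐ ω ∂P, Tendsto
      (fun n : ℕ => ((n : ℝ) ^ 2)⁻¹ *
        ∑ i ∈ Finset.range n, ∑ j ∈ Finset.range n, f (Z i ω) (Z j ω))
      atTop (nhds (∫ z, ∫ z', f z z' ∂ν ∂ν)) := by
  classical
  -- basic notation
  set θ : ℝ := ∫ z, ∫ z', f z z' ∂ν ∂ν with hθdef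
  set d : ℝ := ∫ z, f z z ∂ν with hddef
  -- C is nonneg
  have h𝒵 : Nonempty 𝒵 := by
    by_contra h
    have h1 : ν Set.univ = 1 := measure_univ
    rw [not_nonempty_iff] at h
    rw [Set.univ_eq_empty_iff.2 h] at h1
    simp at h1
  have hC : 0 ≤ C := le_trans (abs_nonneg _) (hf_bdd h𝒵.some h𝒵.some)
  -- the basic random variables
  set F : ℕ → ℕ → Ω → ℝ := fun i j ω => f (Z i ω) (Z j ω) with hFdef
  have hFmeas : ∀ i j, Measurable (F i j) := fun i j =>
    hf_meas.comp ((hZ_meas i).prodMk (hZ_meas j))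
  have hFbdd : ∀ i j ω, |F i j ω| ≤ C := fun i j ω => hf_bdd _ _
  have hFint : ∀ i j, Integrable (F i j) P := by
    intro i j
    refine (integrable_const C).mono' (hFmeas i j).aestronglyMeasurable ?_
    exact Filter.Eventually.of_forall fun ω => (Real.norm_eq_abs _) ▸ hFbdd i j ω
  -- means
  -- bounds on the limiting constants
  have hdC : |d| ≤ C := by
    rw [hddef]
    have := norm_integral_le_of_norm_le_const (μ := ν) (f := fun z => f z z) (C := C)
      (Filter.Eventually.of_forall fun z => (Real.norm_eq_abs _) ▸ hf_bdd z z)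
    simpa using this
  have hinner : ∀ z, |∫ z', f z z' ∂ν| ≤ C := by
    intro z
    have := norm_integral_le_of_norm_le_const (μ := ν) (f := fun z' => f z z') (C := C)
      (Filter.Eventually.of_forall fun z' => (Real.norm_eq_abs _) ▸ hf_bdd z z')
    simpa using this
  have hθC : |θ| ≤ C := by
    rw [hθdef]
    have := norm_integral_le_of_norm_le_const (μ := ν) (f := fun z => ∫ z', f z z' ∂ν) (C := C)
      (Filter.Eventually.of_forall fun z => (Real.norm_eq_abs _) ▸ hinner z)
    simpa using this
  -- integrability of uncurried f on the product
  have huf_int : Integrable (Function.uncurry f) (ν.prod ν) := by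
    refine (integrable_const C).mono' hf_meas.aestronglyMeasurable ?_
    exact Filter.Eventually.of_forall fun p => (Real.norm_eq_abs _) ▸ hf_bdd p.1 p.2
  -- means
  have hmean : ∀ i j, ∫ ω, F i j ω ∂P = if i = j then d else θ := by
    intro i j
    by_cases hij : i = j
    · subst hij
      simp only [if_pos rfl, hddef]
      have hg : Measurable fun z => f z z :=
        hf_meas.comp (measurable_id.prodMk measurable_id)
      rw [← hZ_law i, integral_map (hZ_meas i).aemeasurable hg.aestronglyMeasurable]
      rfl
    · rw [if_neg hij]
      have hpair : P.map (fun ω => (Z i ω, Z j ω)) = ν.prod ν := by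
        have hind := hZ_indep.indepFun hij
        rw [(ProbabilityTheory.indepFun_iff_map_prod_eq_prod_map_map
          (hZ_meas i).aemeasurable (hZ_meas j).aemeasurable).1 hind, hZ_law i, hZ_law j]
      have : ∫ ω, F i j ω ∂P = ∫ p, Function.uncurry f p ∂(ν.prod ν) := by
        rw [← hpair, integral_map ((hZ_meas i).prodMk (hZ_meas j)).aemeasurable
          hf_meas.aestronglyMeasurable]
        rfl
      rw [this, hθdef, MeasureTheory.integral_prod _ huf_int]
      rfl
  -- centered variables
  set c : ℕ → ℕ → ℝ := fun i j => if i = j then d else θ with hcdef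
  have hcC : ∀ i j, |c i j| ≤ C := by
    intro i j; rw [hcdef]; dsimp only; split <;> assumption
  set g : ℕ → ℕ → Ω → ℝ := fun i j ω => F i j ω - c i j with hgdef
  have hgmeas : ∀ i j, Measurable (g i j) := fun i j => (hFmeas i j).sub measurable_const
  have hgbdd : ∀ i j ω, |g i j ω| ≤ 2 * C := by
    intro i j ω
    calc |F i j ω - c i j| ≤ |F i j ω| + |c i j| := abs_sub _ _
    _ ≤ C + C := add_le_add (hFbdd i j ω) (hcC i j)
    _ = 2 * C := by ring
  have hgint : ∀ i j, Integrable (g i j) P := fun i j => (hFint i j).sub (integrable_const _)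
  have hgmean : ∀ i j, ∫ ω, g i j ω ∂P = 0 := by
    intro i j
    rw [hgdef]
    dsimp only
    rw [integral_sub (hFint i j) (integrable_const _), hmean i j, integral_const]
    simp [hcdef]
  have habs2 : ∀ i j k l (ω : Ω), |g i j ω * g k l ω| ≤ 4 * C^2 := by
    intro i j k l ω
    rw [abs_mul]
    nlinarith [abs_nonneg (g i j ω), abs_nonneg (g k l ω), hgbdd i j ω, hgbdd k l ω]
  have hgprodint : ∀ i j k l, Integrable (fun ω => g i j ω * g k l ω) P := by
    intro i j k l
    refine (integrable_const (4 * C^2)).mono'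
      ((hgmeas i j).mul (hgmeas k l)).aestronglyMeasurable ?_
    exact Filter.Eventually.of_forall fun ω => (Real.norm_eq_abs _) ▸ habs2 i j k l ω
  have hprodbdd : ∀ i j k l, |∫ ω, g i j ω * g k l ω ∂P| ≤ 4 * C^2 := by
    intro i j k l
    have := norm_integral_le_of_norm_le_const (μ := P)
      (f := fun ω => g i j ω * g k l ω) (C := 4 * C^2)
      (Filter.Eventually.of_forall fun ω => (Real.norm_eq_abs _) ▸ habs2 i j k l ω)
    simpa [measure_univ] using this
  -- decorrelation for disjoint index pairs
  have hzero : ∀ i j k l : ℕ, i ≠ k → i ≠ l → j ≠ k → j ≠ l →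
      ∫ ω, g i j ω * g k l ω ∂P = 0 := by
    intro i j k l hik hil hjk hjl
    have hpair := hZ_indep.indepFun_prodMk_prodMk hZ_meas i j k l hik hil hjk hjl
    have hind : ProbabilityTheory.IndepFun (g i j) (g k l) P := by
      have h1 : Measurable (fun p : 𝒵 × 𝒵 => Function.uncurry f p - c i j) :=
        hf_meas.sub measurable_const
      have h2 : Measurable (fun p : 𝒵 × 𝒵 => Function.uncurry f p - c k l) :=
        hf_meas.sub measurable_const
      exact hpair.comp h1 h2
    have := hind.integral_fun_mul_eq_mul_integral (hgint i j).aestronglyMeasurable (hgint k l).aestronglyMeasurable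
    rw [hgmean i j, hgmean k l] at this
    simpa using this
  -- variance bound for the centered double sum
  have hvar : ∀ n : ℕ, ∫ ω, (∑ i ∈ Finset.range n, ∑ j ∈ Finset.range n, g i j ω)^2 ∂P
      ≤ 16 * C^2 * (n:ℝ)^3 := by
    intro n
    set s := (Finset.range n) ×ˢ (Finset.range n) with hs
    have hsq : ∀ ω : Ω, (∑ i ∈ Finset.range n, ∑ j ∈ Finset.range n, g i j ω)^2
        = ∑ p ∈ s, ∑ q ∈ s, g p.1 p.2 ω * g q.1 q.2 ω := by
      intro ω
      rw [show (∑ i ∈ Finset.range n, ∑ j ∈ Finset.range n, g i j ω)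
          = ∑ p ∈ s, g p.1 p.2 ω by rw [hs, Finset.sum_product], sq, Finset.sum_mul_sum]
    calc ∫ ω, (∑ i ∈ Finset.range n, ∑ j ∈ Finset.range n, g i j ω)^2 ∂P
        = ∑ p ∈ s, ∑ q ∈ s, ∫ ω, g p.1 p.2 ω * g q.1 q.2 ω ∂P := by
          simp_rw [hsq]
          rw [integral_finset_sum s (fun p _ => integrable_finset_sum s
            (fun q _ => hgprodint p.1 p.2 q.1 q.2))]
          exact Finset.sum_congr rfl fun p _ =>
            integral_finset_sum s (fun q _ => hgprodint p.1 p.2 q.1 q.2)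
      _ ≤ ∑ p ∈ s, ∑ q ∈ s, 4*C^2 * ((if p.1 = q.1 then (1:ℝ) else 0)
            + (if p.1 = q.2 then (1:ℝ) else 0) + (if p.2 = q.1 then (1:ℝ) else 0)
            + (if p.2 = q.2 then (1:ℝ) else 0)) := by
          refine Finset.sum_le_sum fun p _ => Finset.sum_le_sum fun q _ => ?_
          by_cases h : p.1 = q.1 ∨ p.1 = q.2 ∨ p.2 = q.1 ∨ p.2 = q.2
          · have ha : (1:ℝ) ≤ (if p.1 = q.1 then (1:ℝ) else 0)
                + (if p.1 = q.2 then (1:ℝ) else 0) + (if p.2 = q.1 then (1:ℝ) else 0)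
                + (if p.2 = q.2 then (1:ℝ) else 0) := by
              split_ifs <;> (try norm_num) <;> tauto
            refine le_trans (le_trans (le_abs_self _) (hprodbdd p.1 p.2 q.1 q.2)) ?_
            nlinarith [sq_nonneg C]
          · push_neg at h
            obtain ⟨h1, h2, h3, h4⟩ := h
            rw [hzero _ _ _ _ h1 h2 h3 h4]
            simp [h1, h2, h3, h4]
      _ = 16 * C^2 * (n:ℝ)^3 := by
          rw [hs]
          simp_rw [Finset.sum_product]
          have : ∀ (cc : ℝ), ∑ i ∈ Finset.range n, ∑ j ∈ Finset.range n,
              ∑ k ∈ Finset.range n, ∑ l ∈ Finset.range n,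
              cc * ((if i = k then (1:ℝ) else 0) + (if i = l then (1:ℝ) else 0)
                + (if j = k then (1:ℝ) else 0) + (if j = l then (1:ℝ) else 0))
              = 4 * cc * (n:ℝ)^3 := by
            intro cc
            simp [mul_add, Finset.sum_add_distrib, Finset.sum_ite_eq, Finset.sum_ite_eq',
              Finset.mem_range, Finset.sum_const, Finset.card_range, Finset.mul_sum]
            rw [Finset.sum_congr rfl (fun x hx => if_pos (Finset.mem_range.1 hx))]
            simp [Finset.sum_const, Finset.card_range]
            ring
          rw [this (4*C^2)]
          ring
  -- the normalized quantities
  set V : ℕ → Ω → ℝ := fun n ω =>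
    ((n:ℝ)^2)⁻¹ * ∑ i ∈ Finset.range n, ∑ j ∈ Finset.range n, F i j ω with hVdef
  set m : ℕ → ℝ := fun n =>
    ((n:ℝ)^2)⁻¹ * ∑ i ∈ Finset.range n, ∑ j ∈ Finset.range n, c i j with hmdef
  set D : ℕ → Ω → ℝ := fun n ω =>
    ((n:ℝ)^2)⁻¹ * ∑ i ∈ Finset.range n, ∑ j ∈ Finset.range n, g i j ω with hDdef
  have hVD : ∀ n ω, V n ω = D n ω + m n := by
    intro n ω
    rw [hVdef, hmdef, hDdef]
    dsimp only
    rw [← mul_add, ← Finset.sum_add_distrib]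
    congr 2 with i
    rw [← Finset.sum_add_distrib]
    congr 1 with j
    rw [hgdef]
    ring
  have hDmeas : ∀ n, Measurable (D n) := by
    intro n
    apply Measurable.const_mul
    exact Finset.measurable_sum _ (fun i _ => Finset.measurable_sum _ (fun j _ => hgmeas i j))
  have hDbdd : ∀ n ω, |D n ω| ≤ 2 * C := by
    intro n ω
    rw [hDdef]
    dsimp only
    rcases Nat.eq_zero_or_pos n with hn | hn
    · subst hn; simp; positivity
    · have hn' : (0:ℝ) < (n:ℝ)^2 := by positivity
      rw [abs_mul, abs_inv, abs_of_pos hn']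
      rw [inv_mul_le_iff₀ hn']
      calc |∑ i ∈ Finset.range n, ∑ j ∈ Finset.range n, g i j ω|
          ≤ ∑ i ∈ Finset.range n, ∑ j ∈ Finset.range n, |g i j ω| := by
            refine le_trans (Finset.abs_sum_le_sum_abs _ _) ?_
            exact Finset.sum_le_sum fun i _ => Finset.abs_sum_le_sum_abs _ _
        _ ≤ ∑ i ∈ Finset.range n, ∑ j ∈ Finset.range n, 2*C :=
            Finset.sum_le_sum fun i _ => Finset.sum_le_sum fun j _ => hgbdd i j ω
        _ = 2*C * (n:ℝ)^2 := by simp [Finset.sum_const, Finset.card_range]; ring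
        _ = (n:ℝ)^2 * (2*C) := by ring
  have hDsqint : ∀ n, Integrable (fun ω => (D n ω)^2) P := by
    intro n
    refine (integrable_const ((2*C)^2)).mono'
      (((hDmeas n).pow_const 2).aestronglyMeasurable) ?_
    refine Filter.Eventually.of_forall fun ω => ?_
    rw [Real.norm_eq_abs, abs_pow]
    nlinarith [hDbdd n ω, abs_nonneg (D n ω)]
  have hDvar : ∀ n : ℕ, ∫ ω, (D n ω)^2 ∂P ≤ 16 * C^2 * ((n:ℝ))⁻¹ := by
    intro n
    rcases Nat.eq_zero_or_pos n with hn | hn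
    · subst hn
      simp [hDdef]
    · have hn0 : (n:ℝ) ≠ 0 := Nat.cast_ne_zero.2 hn.ne'
      have : ∀ ω, (D n ω)^2 = (((n:ℝ)^2)⁻¹)^2 *
          (∑ i ∈ Finset.range n, ∑ j ∈ Finset.range n, g i j ω)^2 := by
        intro ω; rw [hDdef]; dsimp only; ring
      simp_rw [this]
      rw [integral_const_mul]
      calc (((n:ℝ)^2)⁻¹)^2 * ∫ ω, (∑ i ∈ Finset.range n, ∑ j ∈ Finset.range n, g i j ω)^2 ∂P
          ≤ (((n:ℝ)^2)⁻¹)^2 * (16 * C^2 * (n:ℝ)^3) := by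
            refine mul_le_mul_of_nonneg_left (hvar n) (by positivity)
        _ = 16 * C^2 * ((n:ℝ))⁻¹ := by field_simp
  -- the means converge to θ
  have hmeq : ∀ n : ℕ, 1 ≤ n → m n = θ + (d - θ) * (n:ℝ)⁻¹ := by
    intro n hn
    have hn0 : (n:ℝ) ≠ 0 := Nat.cast_ne_zero.2 (by omega)
    have hcij : ∀ i j : ℕ, c i j = θ + (if i = j then d - θ else 0) := by
      intro i j; rw [hcdef]; dsimp only; split <;> ring
    have hsum : ∑ i ∈ Finset.range n, ∑ j ∈ Finset.range n, c i j
        = (n:ℝ)^2 * θ + (n:ℝ) * (d - θ) := by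
      simp_rw [hcij]
      simp [Finset.sum_add_distrib, Finset.sum_ite_eq, Finset.mem_range,
        Finset.sum_const, Finset.card_range]
      rw [Finset.sum_congr rfl (fun x hx => if_pos (Finset.mem_range.1 hx))]
      simp [Finset.sum_const, Finset.card_range]
      ring
    rw [hmdef]
    dsimp only
    rw [hsum]
    field_simp
  have hmtendsto : Tendsto m atTop (𝓝 θ) := by
    have h1 : Tendsto (fun n : ℕ => θ + (d - θ) * (n:ℝ)⁻¹) atTop (𝓝 (θ + (d - θ) * 0)) :=
      tendsto_const_nhds.add (tendsto_const_nhds.mul tendsto_inv_atTop_nhds_zero_nat)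
    rw [show θ + (d - θ) * 0 = θ by ring] at h1
    refine Tendsto.congr' ?_ h1
    filter_upwards [eventually_ge_atTop 1] with n hn
    exact (hmeq n hn).symm
  -- Borel--Cantelli along the squares
  have hBC : ∀ᵐ ω ∂P, Tendsto (fun k : ℕ => D (k^2) ω) atTop (𝓝 0) := by
    have hsummeas : ∀ k : ℕ, Measurable (fun ω => ENNReal.ofReal ((D (k^2) ω)^2)) :=
      fun k => ((hDmeas (k^2)).pow_const 2).ennreal_ofReal
    have hbsummable : Summable (fun k : ℕ => 16 * C^2 * ((k:ℝ)^2)⁻¹) := by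
      have h1 : Summable (fun k : ℕ => 1 / (k:ℝ)^2) :=
        Real.summable_one_div_nat_pow.2 one_lt_two
      refine (h1.mul_left (16 * C^2)).congr fun k => ?_
      rw [one_div]
    have key : ∫⁻ ω, ∑' k : ℕ, ENNReal.ofReal ((D (k^2) ω)^2) ∂P ≠ ⊤ := by
      rw [lintegral_tsum (fun k => (hsummeas k).aemeasurable)]
      have hle : ∑' k : ℕ, ∫⁻ ω, ENNReal.ofReal ((D (k^2) ω)^2) ∂P
          ≤ ∑' k : ℕ, ENNReal.ofReal (16 * C^2 * ((k:ℝ)^2)⁻¹) := by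
        refine ENNReal.tsum_le_tsum fun k => ?_
        rw [← ofReal_integral_eq_lintegral_ofReal (hDsqint (k^2))
          (Filter.Eventually.of_forall fun ω => sq_nonneg _)]
        refine ENNReal.ofReal_le_ofReal ?_
        have := hDvar (k^2)
        rwa [Nat.cast_pow] at this
      refine ne_top_of_le_ne_top ?_ hle
      rw [← ENNReal.ofReal_tsum_of_nonneg (fun k => by positivity) hbsummable]
      exact ENNReal.ofReal_ne_top
    have hae := ae_lt_top' (AEMeasurable.ennreal_tsum fun k => (hsummeas k).aemeasurable) key
    filter_upwards [hae] with ω hω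
    have h0 : Tendsto (fun k : ℕ => ENNReal.ofReal ((D (k^2) ω)^2)) atTop (𝓝 0) :=
      ENNReal.tendsto_atTop_zero_of_tsum_ne_top hω.ne
    have h1 : Tendsto (fun k : ℕ => (D (k^2) ω)^2) atTop (𝓝 0) := by
      have h2 := (ENNReal.tendsto_toReal (ENNReal.zero_ne_top)).comp h0
      simp only [ENNReal.toReal_zero] at h2
      refine h2.congr fun k => ?_
      simp only [Function.comp_apply, ENNReal.toReal_ofReal (sq_nonneg _)]
    have h2 : Tendsto (fun k : ℕ => |D (k^2) ω|) atTop (𝓝 0) := by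
      have h3 := (Real.continuous_sqrt.tendsto 0).comp h1
      simp only [Real.sqrt_zero] at h3
      refine h3.congr fun k => ?_
      simp only [Function.comp_apply, Real.sqrt_sq_eq_abs]
    have h4 : Tendsto (fun k : ℕ => ‖D (k^2) ω‖) atTop (𝓝 0) := by
      simpa [Real.norm_eq_abs] using h2
    exact tendsto_zero_iff_norm_tendsto_zero.2 h4
  -- almost sure convergence along the squares
  have hsub : ∀ᵐ ω ∂P, Tendsto (fun k : ℕ => V (k^2) ω) atTop (𝓝 θ) := by
    filter_upwards [hBC] with ω hω
    have hm2 : Tendsto (fun k : ℕ => m (k^2)) atTop (𝓝 θ) := by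
      refine hmtendsto.comp ?_
      exact tendsto_atTop_atTop.2 fun b => ⟨b, fun a ha => le_trans ha (Nat.le_self_pow two_ne_zero a)⟩
    have := hω.add hm2
    rw [zero_add] at this
    refine this.congr fun k => (hVD (k^2) ω).symm
  -- interpolation between consecutive squares
  filter_upwards [hsub] with ω hω
  set S : ℕ → ℝ := fun n => ∑ i ∈ Finset.range n, ∑ j ∈ Finset.range n, F i j ω with hSdef
  have hrepr : ∀ n : ℕ, S n = ∑ p ∈ (Finset.range n) ×ˢ (Finset.range n), F p.1 p.2 ω := by
    intro n; rw [hSdef]; dsimp only; rw [Finset.sum_product]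
  have hS1 : ∀ n : ℕ, |S n| ≤ C * (n:ℝ)^2 := by
    intro n
    rw [hrepr]
    calc |∑ p ∈ (Finset.range n) ×ˢ (Finset.range n), F p.1 p.2 ω|
        ≤ ∑ p ∈ (Finset.range n) ×ˢ (Finset.range n), |F p.1 p.2 ω| :=
          Finset.abs_sum_le_sum_abs _ _
      _ ≤ ∑ p ∈ (Finset.range n) ×ˢ (Finset.range n), C :=
          Finset.sum_le_sum fun p _ => hFbdd p.1 p.2 ω
      _ = C * (n:ℝ)^2 := by
          simp [Finset.sum_const, Finset.card_product, Finset.card_range]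
          ring
  have hS2 : ∀ a N : ℕ, a ≤ N → |S N - S a| ≤ C * ((N:ℝ)^2 - (a:ℝ)^2) := by
    intro a N haN
    have hsub2 : (Finset.range a) ×ˢ (Finset.range a) ⊆ (Finset.range N) ×ˢ (Finset.range N) :=
      Finset.product_subset_product (Finset.range_subset_range.2 haN) (Finset.range_subset_range.2 haN)
    rw [hrepr, hrepr, ← Finset.sum_sdiff_eq_sub hsub2]
    set t := ((Finset.range N) ×ˢ (Finset.range N)) \ ((Finset.range a) ×ˢ (Finset.range a))
      with htdef
    have hcard : (t.card : ℝ) = (N:ℝ)^2 - (a:ℝ)^2 := by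
      rw [htdef, Finset.card_sdiff_of_subset hsub2]
      simp only [Finset.card_product, Finset.card_range]
      push_cast [Nat.cast_sub (Nat.mul_le_mul haN haN)]
      ring
    calc |∑ p ∈ t, F p.1 p.2 ω| ≤ ∑ p ∈ t, |F p.1 p.2 ω| := Finset.abs_sum_le_sum_abs _ _
      _ ≤ ∑ p ∈ t, C := Finset.sum_le_sum fun p _ => hFbdd p.1 p.2 ω
      _ = C * ((N:ℝ)^2 - (a:ℝ)^2) := by rw [Finset.sum_const, nsmul_eq_mul, hcard]; ring
  have hVS : ∀ n : ℕ, V n ω = ((n:ℝ)^2)⁻¹ * S n := fun n => rfl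
  -- main interpolation bound
  have hmain : ∀ N : ℕ, 1 ≤ N →
      |V N ω - V ((Nat.sqrt N)^2) ω| ≤ 8 * C / (Nat.sqrt N : ℝ) := by
    intro N hN
    set k := Nat.sqrt N with hkdef
    have hk1 : 1 ≤ k := by
      rw [hkdef]
      exact Nat.le_sqrt.2 (by omega)
    have hk2 : k^2 ≤ N := by
      rw [hkdef]
      exact Nat.sqrt_le' N
    have hk3 : N ≤ k^2 + 2*k := by
      have := Nat.lt_succ_sqrt' N
      rw [← hkdef] at this
      nlinarith [this]
    have hy1 : (1:ℝ) ≤ (k:ℝ) := by exact_mod_cast hk1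
    have hy0 : (0:ℝ) < (k:ℝ) := by linarith
    have hyx : (k:ℝ)^2 ≤ (N:ℝ) := by exact_mod_cast hk2
    have hx0 : (0:ℝ) < (N:ℝ) := by nlinarith
    have hxy2 : (N:ℝ) ≤ (k:ℝ)^2 + 2*(k:ℝ) := by exact_mod_cast hk3
    have hcast : ((k^2 : ℕ) : ℝ) = (k:ℝ)^2 := by push_cast; ring
    have e1 : |S N - S (k^2)| ≤ C * ((N:ℝ)^2 - ((k:ℝ)^2)^2) := by
      have := hS2 (k^2) N hk2
      rwa [hcast] at this
    have e2 : |S (k^2)| ≤ C * ((k:ℝ)^2)^2 := by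
      have := hS1 (k^2)
      rwa [hcast] at this
    have hsplit : V N ω - V (k^2) ω
        = ((N:ℝ)^2)⁻¹ * (S N - S (k^2)) + (((N:ℝ)^2)⁻¹ - (((k:ℝ)^2)^2)⁻¹) * S (k^2) := by
      rw [hVS, hVS, hcast]
      ring
    have hy4x : ((k:ℝ)^2)^2 ≤ (N:ℝ)^2 := by nlinarith
    have hy40 : (0:ℝ) < ((k:ℝ)^2)^2 := by positivity
    have hx20 : (0:ℝ) < (N:ℝ)^2 := by positivity
    have hinvle : ((N:ℝ)^2)⁻¹ ≤ (((k:ℝ)^2)^2)⁻¹ := by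
      exact inv_anti₀ hy40 hy4x
    calc |V N ω - V (k^2) ω|
        ≤ ((N:ℝ)^2)⁻¹ * |S N - S (k^2)| + ((((k:ℝ)^2)^2)⁻¹ - ((N:ℝ)^2)⁻¹) * |S (k^2)| := by
          rw [hsplit]
          refine le_trans (abs_add_le _ _) ?_
          rw [abs_mul, abs_mul]
          refine add_le_add ?_ ?_
          · rw [abs_of_pos (by positivity : (0:ℝ) < ((N:ℝ)^2)⁻¹)]
          · refine mul_le_mul_of_nonneg_right ?_ (abs_nonneg _)
            rw [abs_sub_comm, abs_of_nonneg (by linarith : (0:ℝ) ≤ (((k:ℝ)^2)^2)⁻¹ - ((N:ℝ)^2)⁻¹)]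
      _ ≤ ((N:ℝ)^2)⁻¹ * (C * ((N:ℝ)^2 - ((k:ℝ)^2)^2)) + ((((k:ℝ)^2)^2)⁻¹ - ((N:ℝ)^2)⁻¹) * (C * ((k:ℝ)^2)^2) := by
          refine add_le_add ?_ ?_
          · exact mul_le_mul_of_nonneg_left e1 (by positivity)
          · exact mul_le_mul_of_nonneg_left e2 (by linarith)
      _ = 2 * C * ((N:ℝ)^2 - ((k:ℝ)^2)^2) / (N:ℝ)^2 := by
          field_simp
          ring
      _ ≤ 8 * C / (k:ℝ) := by
          rw [div_le_div_iff₀ hx20 hy0]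
          have h1 : (N:ℝ) - (k:ℝ)^2 ≤ 2*(k:ℝ) := by linarith
          have h2 : (N:ℝ) + (k:ℝ)^2 ≤ 2*(N:ℝ) := by linarith
          have h3 : (N:ℝ)^2 - ((k:ℝ)^2)^2 ≤ 4*(N:ℝ)*(k:ℝ) := by nlinarith
          have h4 : ((N:ℝ)^2 - ((k:ℝ)^2)^2) * (k:ℝ) ≤ 4*(N:ℝ)*(k:ℝ)*(k:ℝ) := by nlinarith
          have h5 : 4*(N:ℝ)*((k:ℝ)*(k:ℝ)) ≤ 4*(N:ℝ)*(N:ℝ) := by nlinarith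
          nlinarith
  -- final squeeze
  have hsqrt_tendsto : Tendsto (fun N : ℕ => Nat.sqrt N) atTop atTop := by
    refine tendsto_atTop_atTop.2 fun b => ⟨b*b, fun a ha => Nat.le_sqrt.2 ha⟩
  have t1 : Tendsto (fun N : ℕ => 8 * C / ((Nat.sqrt N : ℕ) : ℝ)) atTop (𝓝 0) :=
    (tendsto_const_div_atTop_nhds_zero_nat (8*C)).comp hsqrt_tendsto
  have hωabs : Tendsto (fun k : ℕ => |V (k^2) ω - θ|) atTop (𝓝 0) := by
    have := tendsto_iff_norm_sub_tendsto_zero.1 hω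
    simpa [Real.norm_eq_abs] using this
  have t2 : Tendsto (fun N : ℕ => |V ((Nat.sqrt N)^2) ω - θ|) atTop (𝓝 0) :=
    hωabs.comp hsqrt_tendsto
  have tsum0 : Tendsto (fun N : ℕ => 8 * C / ((Nat.sqrt N : ℕ) : ℝ)
      + |V ((Nat.sqrt N)^2) ω - θ|) atTop (𝓝 0) := by
    have := t1.add t2
    rwa [add_zero] at this
  have hsqueeze : Tendsto (fun N : ℕ => |V N ω - θ|) atTop (𝓝 0) := by
    refine squeeze_zero' (Filter.Eventually.of_forall fun N => abs_nonneg _) ?_ tsum0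
    filter_upwards [eventually_ge_atTop 1] with N hN
    calc |V N ω - θ| ≤ |V N ω - V ((Nat.sqrt N)^2) ω| + |V ((Nat.sqrt N)^2) ω - θ| := by
          have := abs_add_le (V N ω - V ((Nat.sqrt N)^2) ω) (V ((Nat.sqrt N)^2) ω - θ)
          simpa using this
      _ ≤ 8 * C / ((Nat.sqrt N : ℕ) : ℝ) + |V ((Nat.sqrt N)^2) ω - θ| :=
          add_le_add_left (hmain N hN) _
  have hfinal : Tendsto (fun N : ℕ => V N ω) atTop (𝓝 θ) := by
    refine tendsto_iff_norm_sub_tendsto_zero.2 ?_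
    simpa [Real.norm_eq_abs] using hsqueeze
  exact hfinal
end
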